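/- The function f(x) = f₁ + (f₃ - f₁) tanh²(ω(x-x₀)) from Table 1 row F₃ (with α > 0, β² - 4αγ > 0, ω² = √(β²-4αγ)/4, f₁ = (-β - √(β²-4αγ))/(2α), f₃ = f₁ + 6ω²/α) satisfies, with c₁ = 2k f₁ and k < 0, the relation k (f')⁴ · k + 2k(c₁ - 2kf)(f')² f'' + (c₁-2kf)²((f'')² - f' f''') = -N₁ (c₁-2kf)^{3/2} ((f')²)^{3/2} / ε₁ with N₁ = (8 ε₂ N₂)/(k ε₁) and N₂ = -ε₂ (k/2)√(-kα/3), i.e. equation (4.25a) holds with these constants. -/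

import Mathlib

open Real

private lemma htanh (y : ℝ) : HasDerivAt Real.tanh (1 - Real.tanh y ^ 2) y := by
  have hc : Real.cosh y ≠ 0 := (Real.cosh_pos y).ne'
  have h := (Real.hasDerivAt_sinh y).div (Real.hasDerivAt_cosh y) hc
  have he : Real.tanh = fun y => Real.sinh y / Real.cosh y := by
    funext z; exact Real.tanh_eq_sinh_div_cosh z
  have hval : (Real.cosh y * Real.cosh y - Real.sinh y * Real.sinh y) / Real.cosh y ^ 2
      = 1 - Real.tanh y ^ 2 := by
    rw [Real.tanh_eq_sinh_div_cosh]; field_simp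
  rw [← hval, he]
  exact h

private lemma tanh_sq_lt_one (y : ℝ) : Real.tanh y ^ 2 < 1 := by
  rw [Real.tanh_eq_sinh_div_cosh, div_pow, div_lt_one (by positivity)]
  nlinarith [Real.cosh_sq_sub_sinh_sq y]

private lemma rpow_three_halves {c u : ℝ} (hc : 0 ≤ c) (hu : 0 ≤ u) :
    (c ^ 2 * u) ^ ((3:ℝ)/2) = c ^ 3 * (u * Real.sqrt u) := by
  have h1 : (0:ℝ) ≤ c ^ 2 * u := by positivity
  have h2 : (c ^ 2 * u) ^ ((3:ℝ)/2) = ((c ^ 2 * u) ^ ((1:ℝ)/2)) ^ (3:ℕ) := by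
    rw [← Real.rpow_natCast (_ ^ ((1:ℝ)/2)) 3, ← Real.rpow_mul h1]
    norm_num
  rw [h2, ← Real.sqrt_eq_rpow, Real.sqrt_mul (sq_nonneg c), Real.sqrt_sq hc, mul_pow]
  have h3 : Real.sqrt u ^ 3 = u * Real.sqrt u := by
    rw [pow_succ, Real.sq_sqrt hu]
  rw [h3]

theorem tanh_table_row_F3
    (α β γ k ε₁ ε₂ x₀ : ℝ)
    (hα : 0 < α) (hdisc : 0 < β^2 - 4*α*γ) (hk : k < 0)
    (hε₁ : ε₁ = 1 ∨ ε₁ = -1) (hε₂ : ε₂ = 1 ∨ ε₂ = -1)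
    (ω f₁ f₃ c₁ N₁ N₂ : ℝ)
    (hω : ω = (β^2 - 4*α*γ) ^ ((1:ℝ)/4) / 2)
    (hf₁ : f₁ = (-β - Real.sqrt (β^2 - 4*α*γ)) / (2*α))
    (hf₃ : f₃ = f₁ + 6*ω^2/α)
    (hc₁ : c₁ = 2*k*f₁)
    (hN₂ : N₂ = -ε₂ * (k/2) * Real.sqrt (-k*α/3))
    (hN₁ : N₁ = 8*ε₂*N₂ / (k*ε₁))
    (f : ℝ → ℝ)
    (hf : ∀ x, f x = f₁ + (f₃ - f₁) * (Real.tanh (ω*(x - x₀)))^2) :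
    ∀ x, Real.tanh (ω*(x - x₀)) ≠ 0 → Real.tanh (ω*(x - x₀)) ≠ 1 →
      Real.tanh (ω*(x - x₀)) ≠ -1 → 0 < c₁ - 2*k*f x →
      -ε₁ * (k^2 * (deriv f x)^4
          + 2*k*(c₁ - 2*k*f x) * (deriv f x)^2 * deriv (deriv f) x
          + (c₁ - 2*k*f x)^2 * ((deriv (deriv f) x)^2
              - deriv f x * deriv (deriv (deriv f)) x))
        / ((c₁ - 2*k*f x) ^ ((3:ℝ)/2) * ((deriv f x)^2) ^ ((3:ℝ)/2)) = N₁ := by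
  have hk0 : k ≠ 0 := ne_of_lt hk
  have hα0 : α ≠ 0 := hα.ne'
  have hω0 : 0 < ω := by rw [hω]; positivity
  set A : ℝ := 6*ω^2/α with hAdef
  have hA0 : 0 < A := by rw [hAdef]; positivity
  set T : ℝ → ℝ := fun x => Real.tanh (ω*(x - x₀)) with hT
  have hg : ∀ x : ℝ, HasDerivAt T (ω * (1 - T x ^ 2)) x := by
    intro x
    have h1 : HasDerivAt (fun x : ℝ => ω*(x - x₀)) ω x := by
      simpa using ((hasDerivAt_id x).sub_const x₀).const_mul ω
    have := (htanh (ω*(x - x₀))).comp x h1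
    simpa [hT, mul_comm, Function.comp_def] using this
  have hfe : f = fun x => f₁ + A * (T x)^2 := by
    funext x; rw [hf x, hf₃]; ring
  have hf' : ∀ x : ℝ, HasDerivAt f (2*A*ω*(T x - (T x)^3)) x := by
    intro x
    rw [hfe]
    have := (((hg x).pow 2).const_mul A).const_add f₁
    refine this.congr_deriv ?_
    push_cast
    ring
  have hd1 : deriv f = fun x => 2*A*ω*(T x - (T x)^3) := funext fun x => (hf' x).deriv
  have hf'' : ∀ x : ℝ, HasDerivAt (deriv f)
      (2*A*ω^2*(1 - 4*(T x)^2 + 3*(T x)^4)) x := by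
    intro x
    rw [hd1]
    have := ((hg x).sub ((hg x).pow 3)).const_mul (2*A*ω)
    refine this.congr_deriv ?_
    push_cast
    ring
  have hd2 : deriv (deriv f) = fun x => 2*A*ω^2*(1 - 4*(T x)^2 + 3*(T x)^4) :=
    funext fun x => (hf'' x).deriv
  have hf''' : ∀ x : ℝ, HasDerivAt (deriv (deriv f))
      (2*A*ω^3*(-8*(T x) + 20*(T x)^3 - 12*(T x)^5)) x := by
    intro x
    rw [hd2]
    have := (((hasDerivAt_const x (1:ℝ)).sub (((hg x).pow 2).const_mul 4)).add
        (((hg x).pow 4).const_mul 3)).const_mul (2*A*ω^2)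
    refine this.congr_deriv ?_
    push_cast
    ring
  intro x ht0 _ _ hpos
  have hDx : c₁ - 2*k*f x = (-2*k*A) * (T x)^2 := by rw [hf x, hc₁, hf₃]; ring
  rw [(hf''' x).deriv, (hf'' x).deriv, (hf' x).deriv, hDx]
  set t : ℝ := T x with htdef
  have hts : t ^ 2 < 1 := _root_.tanh_sq_lt_one _
  have hs : 0 < 1 - t^2 := by linarith
  have ht2 : 0 < t^2 := lt_of_le_of_ne (sq_nonneg t) (Ne.symm (pow_ne_zero 2 ht0))
  have hu2 : (0:ℝ) < -2*k*A := by nlinarith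
  have hS : (0:ℝ) ≤ -k*α/3 := by nlinarith
  have hN₁' : N₁ = -4*ε₁*Real.sqrt (-k*α/3) := by
    rcases hε₁ with rfl | rfl <;> rcases hε₂ with rfl | rfl <;>
      rw [hN₁, hN₂] <;> field_simp <;> ring
  have hS2 : Real.sqrt (-k*α/3) * Real.sqrt (-2*k*A) = -2*k*ω := by
    rw [← Real.sqrt_mul hS]
    have he : -k*α/3*(-2*k*A) = (-2*k*ω)^2 := by
      rw [hAdef]; field_simp; ring
    rw [he, Real.sqrt_sq (by nlinarith)]
  have hcpos : (0:ℝ) < 2*A*ω*(t^2*(1-t^2)) :=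
    mul_pos (by positivity) (mul_pos ht2 hs)
  have hden : ((-2*k*A) * t^2) ^ ((3:ℝ)/2) * ((2*A*ω*(t - t^3))^2) ^ ((3:ℝ)/2)
      = (2*A*ω*(t^2*(1-t^2)))^3 * ((-2*k*A) * Real.sqrt (-2*k*A)) := by
    rw [← Real.mul_rpow (mul_nonneg hu2.le (sq_nonneg t)) (sq_nonneg _)]
    rw [show (-2*k*A) * t^2 * (2*A*ω*(t - t^3))^2
        = (2*A*ω*(t^2*(1-t^2)))^2 * (-2*k*A) by ring]
    exact rpow_three_halves hcpos.le hu2.le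
  rw [hden, div_eq_iff (ne_of_gt (mul_pos (pow_pos hcpos 3)
      (mul_pos hu2 (Real.sqrt_pos.mpr hu2)))), hN₁']
  linear_combination (-64*ε₁*k*A^4*ω^3*t^6*(1-t^2)^3) * hS2
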